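/- arXiv:2307.00962 — 2 statements merged into one kernel-verified Lean document; each statement's English description precedes it below -/
import Mathlib

section
/- Let U_el be an elastic quantum walk satisfying (A-1). (i) For every κ ∈ ℂ with Im κ < 0, the only outgoing solution u of U_el u = e^{−iκ}u is u = 0; thus elastic quantum walks have no resonances other than eigenvalues. (ii) If U_el is non-trapping (no trajectory is closed), then U_el has no eigenvalues. -/
noncomputable section

namespace QWPaper

open Complex

/-- Sites of the two-dimensional lattice. -/
abbrev Site : Type := ℤ × ℤ

/-- Chirality indices: `0 = ←`, `1 = →`, `2 = ↓`, `3 = ↑`. -/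
abbrev Chir : Type := Fin 4

abbrev V : Type := EuclideanSpace ℂ (Fin 4)

/-- The Hilbert space `H = ℓ²(ℤ²; ℂ⁴)`. -/
abbrev H : Type := lp (fun _ : Site => V) 2

/-- The inner domain `Ω^i = {x : |x₁| ≤ M₀, |x₂| ≤ M₀}`. -/
def innerDom (M₀ : ℤ) : Set Site := {x | |x.1| ≤ M₀ ∧ |x.2| ≤ M₀}

/-- `S` is the shift operator:
`(Su)(x) = (u_←(x+e₁), u_→(x−e₁), u_↓(x+e₂), u_↑(x−e₂))`. -/
def IsShiftOp (S : H →L[ℂ] H) : Prop :=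
  ∀ (u : H) (x : Site),
    (S u) x 0 = u (x.1 + 1, x.2) 0 ∧
    (S u) x 1 = u (x.1 - 1, x.2) 1 ∧
    (S u) x 2 = u (x.1, x.2 + 1) 2 ∧
    (S u) x 3 = u (x.1, x.2 - 1) 3

/-- `A` is the bounded operator of pointwise multiplication by the matrix family `C`. -/
def IsCoinOp (A : H →L[ℂ] H) (C : Site → Matrix Chir Chir ℂ) : Prop :=
  ∀ (u : H) (x : Site) (i : Chir), (A u) x i = ∑ j : Chir, C x i j * u x j

/-- Every coin matrix is unitary. -/
def IsUnitaryCoin (C : Site → Matrix Chir Chir ℂ) : Prop :=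
  ∀ x, C x ∈ Matrix.unitaryGroup Chir ℂ

/-- Assumption (A-1): `C(x) = I₄` off `Ω^i`, with `M₀ ≥ 1`. -/
def SatisfiesA1 (C : Site → Matrix Chir Chir ℂ) (M₀ : ℤ) : Prop :=
  1 ≤ M₀ ∧ ∀ x, x ∉ innerDom M₀ → C x = 1

/-- `D_x(θ) = diag(e^{iθx₁}, e^{−iθx₁}, e^{iθx₂}, e^{−iθx₂})`. -/
def Dmat (θ : ℂ) (x : Site) : Matrix Chir Chir ℂ :=
  Matrix.diagonal ![Complex.exp (Complex.I * θ * x.1), Complex.exp (-(Complex.I * θ * x.1)),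
    Complex.exp (Complex.I * θ * x.2), Complex.exp (-(Complex.I * θ * x.2))]

/-- The translated coin `D_x(θ) C(x) D_x(θ)⁻¹`. -/
def transCoin (θ : ℂ) (C : Site → Matrix Chir Chir ℂ) (x : Site) : Matrix Chir Chir ℂ :=
  Dmat θ x * C x * (Dmat θ x)⁻¹

/-- The complex translated walk `U(θ) = e^{−iθ} S M(θ)`. -/
def transWalkOp (θ : ℂ) (S Mθ : H →L[ℂ] H) : H →L[ℂ] H :=
  Complex.exp (-(Complex.I * θ)) • (S.comp Mθ)

/-- `⟨x⟩ = (1 + |x|²)^{1/2}`. -/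
def jnorm (x : Site) : ℝ := Real.sqrt (1 + ((x.1 : ℝ) ^ 2 + (x.2 : ℝ) ^ 2))

/-- Super-exponentially decreasing elements of `H`: `e^{τ⟨x⟩} f ∈ H` for every `τ > 0`. -/
def SuperExpDecay (f : H) : Prop :=
  ∀ τ : ℝ, 0 < τ → Memℓp (fun x : Site => (Real.exp (τ * jnorm x) • f x : V)) 2

/-- Pointwise shift of an arbitrary `ℂ⁴`-valued map on `ℤ²`. -/
def ptShift (v : Site → Chir → ℂ) (x : Site) : Chir → ℂ :=
  ![v (x.1 + 1, x.2) 0, v (x.1 - 1, x.2) 1, v (x.1, x.2 + 1) 2, v (x.1, x.2 - 1) 3]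

/-- Pointwise coin action on an arbitrary `ℂ⁴`-valued map on `ℤ²`. -/
def ptCoin (C : Site → Matrix Chir Chir ℂ) (u : Site → Chir → ℂ) (x : Site) (i : Chir) : ℂ :=
  ∑ j : Chir, C x i j * u x j

/-- Pointwise action of the walk `U = SC` on arbitrary `ℂ⁴`-valued maps. -/
def ptWalk (C : Site → Matrix Chir Chir ℂ) (u : Site → Chir → ℂ) : Site → Chir → ℂ :=
  ptShift (ptCoin C u)

/-- `u` is a pointwise solution of `U u = e^{−iκ} u`. -/
def IsPtSolution (C : Site → Matrix Chir Chir ℂ) (κ : ℂ) (u : Site → Chir → ℂ) : Prop :=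
  ∀ (x : Site) (i : Chir), ptWalk C u x i = Complex.exp (-(Complex.I * κ)) * u x i

/-- `u` is outgoing with the explicit sequences `aL aR aD aU`. -/
def IsOutgoingWith (M₀ : ℤ) (κ : ℂ) (aL aR aD aU : ℤ → ℂ) (u : Site → Chir → ℂ) : Prop :=
  (∀ x : Site, x.1 < -M₀ → u x 0 = aL x.2 * Complex.exp (-(Complex.I * κ * x.1))) ∧
  (∀ x : Site, M₀ < x.1 → u x 0 = 0) ∧
  (∀ x : Site, x.1 < -M₀ → u x 1 = 0) ∧
  (∀ x : Site, M₀ < x.1 → u x 1 = aR x.2 * Complex.exp (Complex.I * κ * x.1)) ∧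
  (∀ x : Site, x.2 < -M₀ → u x 2 = aD x.1 * Complex.exp (-(Complex.I * κ * x.2))) ∧
  (∀ x : Site, M₀ < x.2 → u x 2 = 0) ∧
  (∀ x : Site, x.2 < -M₀ → u x 3 = 0) ∧
  (∀ x : Site, M₀ < x.2 → u x 3 = aU x.1 * Complex.exp (Complex.I * κ * x.2))

/-- `u` is an outgoing map. -/
def IsOutgoing (M₀ : ℤ) (κ : ℂ) (u : Site → Chir → ℂ) : Prop :=
  ∃ aL aR aD aU : ℤ → ℂ, IsOutgoingWith M₀ κ aL aR aD aU u

/-- Elastic coin: column `j` of `C_el(x)` is `e^{iα_j(x)} 𝐞_{σ(x)(j)}`. -/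
def elasticCoin (σ : Site → Equiv.Perm Chir) (α : Site → Chir → ℝ) (x : Site) :
    Matrix Chir Chir ℂ :=
  Matrix.of fun i j => if i = σ x j then Complex.exp (Complex.I * (α x j : ℂ)) else 0

/-- The initial state `δ_y 𝐞_j ∈ H`. -/
def deltaState (y : Site) (j : Chir) : H := lp.single 2 y (EuclideanSpace.single j 1)

/-- `(q, p)` is the trajectory map of the elastic walk `Uel`:
`Uel^t (δ_y 𝐞_j)` is a modulus-one multiple of `δ_{q(t,y,j)} 𝐞_{p(t,y,j)}`. -/
def IsTrajectory (Uel : unitary (H →L[ℂ] H))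
    (q : ℤ → Site → Chir → Site) (p : ℤ → Site → Chir → Chir) : Prop :=
  (∀ y j, q 0 y j = y ∧ p 0 y j = j) ∧
  ∀ (t : ℤ) (y : Site) (j : Chir), ∃ c : ℂ, ‖c‖ = 1 ∧
    ((Uel ^ t : unitary (H →L[ℂ] H)) : H →L[ℂ] H) (deltaState y j)
      = c • deltaState (q t y j) (p t y j)

/-- Euclidean norm of a lattice point. -/
def znorm (x : Site) : ℝ := Real.sqrt ((x.1 : ℝ) ^ 2 + (x.2 : ℝ) ^ 2)

/-- The parts of the barrier `K`. -/
def K1p (M₀ : ℤ) : Set Site := {x | x.1 = M₀ ∧ |x.2| ≤ M₀}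
def K1m (M₀ : ℤ) : Set Site := {x | x.1 = -M₀ ∧ |x.2| ≤ M₀}
def K2p (M₀ : ℤ) : Set Site := {x | x.2 = M₀ ∧ |x.1| ≤ M₀}
def K2m (M₀ : ℤ) : Set Site := {x | x.2 = -M₀ ∧ |x.1| ≤ M₀}
def Kbar (M₀ : ℤ) : Set Site := K1p M₀ ∪ K1m M₀ ∪ K2p M₀ ∪ K2m M₀

/-- The exterior domain `Ω^e = (ℤ² \ Ω^i) ∪ K`. -/
def outerDom (M₀ : ℤ) : Set Site := {x | x ∉ innerDom M₀} ∪ Kbar M₀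

/-- Membership in the interior space `H_i`. -/
def memHi (M₀ : ℤ) (u : H) : Prop :=
  (∀ x, x ∉ innerDom M₀ → ∀ i : Chir, u x i = 0) ∧
  (∀ x ∈ K1p M₀, u x 0 = 0) ∧ (∀ x ∈ K1m M₀, u x 1 = 0) ∧
  (∀ x ∈ K2p M₀, u x 2 = 0) ∧ (∀ x ∈ K2m M₀, u x 3 = 0)

/-- Membership in the exterior space `H_e`. -/
def memHe (M₀ : ℤ) (u : H) : Prop :=
  (∀ x, x ∉ outerDom M₀ → ∀ i : Chir, u x i = 0) ∧
  (∀ x ∈ K1m M₀ ∪ K2p M₀ ∪ K2m M₀, u x 0 = 0) ∧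
  (∀ x ∈ K1p M₀ ∪ K2p M₀ ∪ K2m M₀, u x 1 = 0) ∧
  (∀ x ∈ K2m M₀ ∪ K1p M₀ ∪ K1m M₀, u x 2 = 0) ∧
  (∀ x ∈ K2p M₀ ∪ K1p M₀ ∪ K1m M₀, u x 3 = 0)

/-- The non-penetrable barrier conditions for `U_np`. -/
def IsBarrierWalk (M₀ : ℤ) (Unp : H →L[ℂ] H) : Prop :=
  ∀ u : H,
    (∀ x ∈ K1p M₀, (Unp u) (x.1 + 1, x.2) 1 = u x 0) ∧
    (∀ x ∈ K1m M₀, (Unp u) (x.1 - 1, x.2) 0 = u x 0) ∧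
    (∀ x ∈ K2p M₀, (Unp u) (x.1, x.2 + 1) 3 = u x 2) ∧
    (∀ x ∈ K2m M₀, (Unp u) (x.1, x.2 - 1) 2 = u x 3)

/-- The rectangular loop `L_{ε,s}(μ)` (boundary of the rectangle with half-widths `a`, `b`). -/
def loopSet (μ a b : ℝ) : Set ℂ :=
  {κ | |κ.re - μ| ≤ a ∧ |κ.im| ≤ b ∧ (|κ.re - μ| = a ∨ |κ.im| = b)}

/-- The four-corner elastic coin. -/
def fourCornerCoin (m₀ n₀ : ℤ) (x : Site) : Matrix Chir Chir ℂ :=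
  if x = ((0 : ℤ), (0 : ℤ)) then !![0,1,0,0; 0,0,1,0; 0,0,0,1; 1,0,0,0]
  else if x = (m₀, (0 : ℤ)) then !![0,0,1,0; 1,0,0,0; 0,0,0,1; 0,1,0,0]
  else if x = (m₀, n₀) then !![0,0,0,1; 1,0,0,0; 0,1,0,0; 0,0,1,0]
  else if x = ((0 : ℤ), n₀) then !![0,1,0,0; 0,0,0,1; 1,0,0,0; 0,0,1,0]
  else 1

/-- The four corners. -/
def corners (m₀ n₀ : ℤ) : Set Site :=
  {((0 : ℤ), (0 : ℤ)), (m₀, (0 : ℤ)), (m₀, n₀), ((0 : ℤ), n₀)}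

/-- A perturbed four-corner coin `C_ε`. -/
def IsPerturbedFourCorner (m₀ n₀ : ℤ) (ε : ℝ) (Cε : Site → Matrix Chir Chir ℂ) : Prop :=
  IsUnitaryCoin Cε ∧
  (∀ x, x ∉ corners m₀ n₀ → Cε x = 1) ∧
  (∀ x ∈ corners m₀ n₀, ∀ i j : Chir, ‖Cε x i j - fourCornerCoin m₀ n₀ x i j‖ < ε) ∧
  Cε ((0 : ℤ), (0 : ℤ)) 1 0 = 0 ∧ Cε ((0 : ℤ), (0 : ℤ)) 3 2 = 0 ∧
  Cε (m₀, (0 : ℤ)) 3 2 = 0 ∧ Cε (m₀, (0 : ℤ)) 0 1 = 0 ∧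
  Cε (m₀, n₀) 2 3 = 0 ∧ Cε (m₀, n₀) 0 1 = 0 ∧
  Cε ((0 : ℤ), n₀) 1 0 = 0 ∧ Cε ((0 : ℤ), n₀) 2 3 = 0

/-- `c_ε⁺ = c_{↑,←}(0,0) c_{←,↓}(m₀,0) c_{↓,→}(m₀,n₀) c_{→,↑}(0,n₀)`. -/
def cPlus (m₀ n₀ : ℤ) (Cε : Site → Matrix Chir Chir ℂ) : ℂ :=
  Cε ((0 : ℤ), (0 : ℤ)) 3 0 * Cε (m₀, (0 : ℤ)) 0 2 * Cε (m₀, n₀) 2 1 * Cε ((0 : ℤ), n₀) 1 3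

/-- `c_ε⁻ = c_{→,↓}(0,0) c_{↑,→}(m₀,0) c_{←,↑}(m₀,n₀) c_{↓,←}(0,n₀)`. -/
def cMinus (m₀ n₀ : ℤ) (Cε : Site → Matrix Chir Chir ℂ) : ℂ :=
  Cε ((0 : ℤ), (0 : ℤ)) 1 2 * Cε (m₀, (0 : ℤ)) 3 1 * Cε (m₀, n₀) 0 3 * Cε ((0 : ℤ), n₀) 2 0

/-- `u ∈ H` is supported on the set `A ⊆ ℤ² × {←,→,↓,↑}`. -/
def SupportedOn (u : H) (A : Set (Site × Chir)) : Prop :=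
  ∀ (x : Site) (i : Chir), (x, i) ∉ A → u x i = 0

/-- The image of the closed trajectory `Φ₊` of the four-corner walk. -/
def imPhiPlus (m₀ n₀ : ℤ) : Set (Site × Chir) :=
  {w | ∃ t : ℤ, 1 ≤ t ∧ t ≤ n₀ ∧ w = (((0 : ℤ), t), (3 : Chir))} ∪
  {w | ∃ t : ℤ, 1 ≤ t ∧ t ≤ m₀ ∧ w = ((t, n₀), (1 : Chir))} ∪
  {w | ∃ t : ℤ, 0 ≤ t ∧ t ≤ n₀ - 1 ∧ w = ((m₀, t), (2 : Chir))} ∪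
  {w | ∃ t : ℤ, 0 ≤ t ∧ t ≤ m₀ - 1 ∧ w = ((t, (0 : ℤ)), (0 : Chir))}

/-- The image of the reversed closed trajectory `Φ₋` of the four-corner walk. -/
def imPhiMinus (m₀ n₀ : ℤ) : Set (Site × Chir) :=
  {w | ∃ t : ℤ, 1 ≤ t ∧ t ≤ m₀ ∧ w = ((t, (0 : ℤ)), (1 : Chir))} ∪
  {w | ∃ t : ℤ, 1 ≤ t ∧ t ≤ n₀ ∧ w = ((m₀, t), (3 : Chir))} ∪
  {w | ∃ t : ℤ, 0 ≤ t ∧ t ≤ m₀ - 1 ∧ w = ((t, n₀), (0 : Chir))} ∪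
  {w | ∃ t : ℤ, 0 ≤ t ∧ t ≤ n₀ - 1 ∧ w = (((0 : ℤ), t), (2 : Chir))}

/-- The eight outgoing tails starting from the four corners. -/
def tails (m₀ n₀ : ℤ) : Set (Site × Chir) :=
  {w | ∃ N y₂ : ℤ, 1 ≤ N ∧ (y₂ = 0 ∨ y₂ = n₀) ∧ w = ((-N, y₂), (0 : Chir))} ∪
  {w | ∃ N y₁ : ℤ, 1 ≤ N ∧ (y₁ = 0 ∨ y₁ = m₀) ∧ w = ((y₁, n₀ + N), (3 : Chir))} ∪
  {w | ∃ N y₁ : ℤ, 1 ≤ N ∧ (y₁ = 0 ∨ y₁ = m₀) ∧ w = ((y₁, -N), (2 : Chir))} ∪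
  {w | ∃ N y₂ : ℤ, 1 ≤ N ∧ (y₂ = 0 ∨ y₂ = n₀) ∧ w = ((m₀ + N, y₂), (1 : Chir))}

/-- The shape resonance perturbation `C_ε` of the barrier coin `C_np`. -/
def IsShapePerturbation (M₀ : ℤ) (Cnp : Site → Matrix Chir Chir ℂ) (ε : ℝ)
    (Cε : Site → Matrix Chir Chir ℂ) : Prop :=
  IsUnitaryCoin Cε ∧ (∀ x, x ∉ Kbar M₀ → Cε x = Cnp x) ∧
  (∀ x ∈ Kbar M₀, ∀ i j : Chir, ‖Cε x i j - Cnp x i j‖ < ε)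

/-- Counterclockwise contour integral of an operator-valued map over the boundary of the
rectangle centered at `μ ∈ ℝ` with half-widths `a` and `b`. -/
def rectIntegral (f : ℂ → (H →L[ℂ] H)) (μ a b : ℝ) : H →L[ℂ] H :=
  ((∫ t in (μ - a)..(μ + a), f (t - b * Complex.I)) -
      (∫ t in (μ - a)..(μ + a), f (t + b * Complex.I))) +
  Complex.I • ((∫ s in (-b)..b, f ((μ + a : ℝ) + s * Complex.I)) -
      (∫ s in (-b)..b, f ((μ - a : ℝ) + s * Complex.I)))

/-- The Riesz-type projection `(1/2π) ∮ e^{−iκ} (A − e^{−iκ})^{−1} dκ` over the rectangular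
loop of half-widths `a`, `b` around `μ`. -/
def rieszProj (A : H →L[ℂ] H) (μ a b : ℝ) : H →L[ℂ] H :=
  (1 / (2 * Real.pi)) •
    rectIntegral (fun κ => Complex.exp (-(Complex.I * κ)) •
      Ring.inverse (A - Complex.exp (-(Complex.I * κ)) • (1 : H →L[ℂ] H))) μ a b


/-- Displacement vector of each chirality for the elastic walk. -/
def dvec : Chir → Site := ![(-1,0), (1,0), (0,-1), (0,1)]

/-- One backward step of an elastic walk, as a bijection of phase space. -/
def prevStep (σ : Site → Equiv.Perm Chir) : Site × Chir ≃ Site × Chir where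
  toFun w := (w.1 - dvec w.2, (σ (w.1 - dvec w.2)).symm w.2)
  invFun w := (w.1 + dvec (σ w.1 w.2), σ w.1 w.2)
  left_inv := by rintro ⟨x, i⟩; simp
  right_inv := by rintro ⟨y, j⟩; simp

lemma elastic_ptCoin (σ : Site → Equiv.Perm Chir) (α : Site → Chir → ℝ)
    (u : Site → Chir → ℂ) (y : Site) (i : Chir) :
    ptCoin (elasticCoin σ α) u y i
      = Complex.exp (Complex.I * (α y ((σ y).symm i) : ℂ)) * u y ((σ y).symm i) := by
  classical
  unfold ptCoin elasticCoin
  rw [Finset.sum_eq_single ((σ y).symm i)]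
  · rw [Matrix.of_apply, if_pos (Equiv.apply_symm_apply (σ y) i).symm]
  · intro j _ hj
    rw [Matrix.of_apply, if_neg, zero_mul]
    intro h
    exact hj (by rw [h, Equiv.symm_apply_apply])
  · intro h; exact absurd (Finset.mem_univ _) h

lemma sigma_id_of_coin_one {σ : Site → Equiv.Perm Chir} {α : Site → Chir → ℝ} {y : Site}
    (h : elasticCoin σ α y = 1) (j : Chir) : σ y j = j := by
  by_contra hne
  have h2 := congrFun (congrFun h (σ y j)) j
  simp only [elasticCoin, Matrix.of_apply, if_pos rfl, Matrix.one_apply_ne hne] at h2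
  exact Complex.exp_ne_zero _ h2

lemma elastic_no_outgoing (M₀ : ℤ) (σ : Site → Equiv.Perm Chir) (α : Site → Chir → ℝ)
    (hA1 : ∀ x, x ∉ innerDom M₀ → elasticCoin σ α x = 1)
    (κ : ℂ) (hκ : κ.im < 0) (u : Site → Chir → ℂ)
    (hout : IsOutgoing M₀ κ u) (hsol : IsPtSolution (elasticCoin σ α) κ u) :
    ∀ (x : Site) (i : Chir), u x i = 0 := by
  classical
  obtain ⟨aL, aR, aD, aU, h1, h2, h3, h4, h5, h6, h7, h8⟩ := hout
  set lam : ℝ := Real.exp κ.im with hlamdef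
  have hlam0 : 0 < lam := Real.exp_pos _
  have hlam1 : lam < 1 := by
    rw [hlamdef]
    calc Real.exp κ.im < Real.exp 0 := Real.exp_lt_exp.mpr hκ
      _ = 1 := Real.exp_zero
  have hnormE : ‖Complex.exp (-(Complex.I * κ))‖ = lam := by
    rw [Complex.norm_exp]
    congr 1
    simp [Complex.mul_re]
  have hnorma : ∀ a : ℝ, ‖Complex.exp (Complex.I * (a : ℂ))‖ = 1 := by
    intro a
    rw [Complex.norm_exp]
    simp [Complex.mul_re]
  have key : ∀ w : Site × Chir,
      ‖u ((prevStep σ w).1) ((prevStep σ w).2)‖ = lam * ‖u w.1 w.2‖ := by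
    rintro ⟨x, i⟩
    have hx := hsol x i
    have norms : ∀ (y : Site) (j : Chir),
        Complex.exp (Complex.I * ((α y j : ℝ) : ℂ)) * u y j
          = Complex.exp (-(Complex.I * κ)) * u x i →
        ‖u y j‖ = lam * ‖u x i‖ := by
      intro y j h
      have h' := congrArg norm h
      rwa [norm_mul, norm_mul, hnorma, one_mul, hnormE] at h'
    fin_cases i
    · have hx' : ptCoin (elasticCoin σ α) u ((x.1 + 1 : ℤ), x.2) 0
          = Complex.exp (-(Complex.I * κ)) * u x 0 := by
        simpa [ptWalk, ptShift] using hx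
      rw [elastic_ptCoin] at hx'
      show ‖u (x - dvec (0 : Chir)) ((σ (x - dvec (0 : Chir))).symm 0)‖ = lam * ‖u x 0‖
      rw [show x - dvec (0 : Chir) = ((x.1 + 1 : ℤ), x.2) from by
        rw [Prod.ext_iff]
        exact ⟨show x.1 - (-1 : ℤ) = x.1 + 1 by ring, show x.2 - (0 : ℤ) = x.2 by ring⟩]
      exact norms _ _ hx'
    · have hx' : ptCoin (elasticCoin σ α) u ((x.1 - 1 : ℤ), x.2) 1
          = Complex.exp (-(Complex.I * κ)) * u x 1 := by
        simpa [ptWalk, ptShift] using hx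
      rw [elastic_ptCoin] at hx'
      show ‖u (x - dvec (1 : Chir)) ((σ (x - dvec (1 : Chir))).symm 1)‖ = lam * ‖u x 1‖
      rw [show x - dvec (1 : Chir) = ((x.1 - 1 : ℤ), x.2) from by
        rw [Prod.ext_iff]
        exact ⟨show x.1 - (1 : ℤ) = x.1 - 1 by ring, show x.2 - (0 : ℤ) = x.2 by ring⟩]
      exact norms _ _ hx'
    · have hx' : ptCoin (elasticCoin σ α) u (x.1, (x.2 + 1 : ℤ)) 2
          = Complex.exp (-(Complex.I * κ)) * u x 2 := by
        simpa [ptWalk, ptShift] using hx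
      rw [elastic_ptCoin] at hx'
      show ‖u (x - dvec (2 : Chir)) ((σ (x - dvec (2 : Chir))).symm 2)‖ = lam * ‖u x 2‖
      rw [show x - dvec (2 : Chir) = (x.1, (x.2 + 1 : ℤ)) from by
        rw [Prod.ext_iff]
        exact ⟨show x.1 - (0 : ℤ) = x.1 by ring, show x.2 - (-1 : ℤ) = x.2 + 1 by ring⟩]
      exact norms _ _ hx'
    · have hx' : ptCoin (elasticCoin σ α) u (x.1, (x.2 - 1 : ℤ)) 3
          = Complex.exp (-(Complex.I * κ)) * u x 3 := by
        simpa [ptWalk, ptShift] using hx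
      rw [elastic_ptCoin] at hx'
      show ‖u (x - dvec (3 : Chir)) ((σ (x - dvec (3 : Chir))).symm 3)‖ = lam * ‖u x 3‖
      rw [show x - dvec (3 : Chir) = (x.1, (x.2 - 1 : ℤ)) from by
        rw [Prod.ext_iff]
        exact ⟨show x.1 - (0 : ℤ) = x.1 by ring, show x.2 - (1 : ℤ) = x.2 - 1 by ring⟩]
      exact norms _ _ hx'
  intro x i
  rw [← norm_eq_zero]
  set f : ℕ → Site × Chir := fun n => (prevStep σ)^[n] (x, i) with hfdef
  have hfs : ∀ n, f (n + 1) = prevStep σ (f n) := by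
    intro n
    rw [hfdef]
    simp [Function.iterate_succ_apply']
  have hmn : ∀ n, ‖u (f n).1 (f n).2‖ = lam ^ n * ‖u x i‖ := by
    intro n
    induction n with
    | zero => simp [hfdef]
    | succ n ih =>
      rw [hfs n, key (f n), ih, pow_succ]
      ring
  by_cases hper : ∃ n : ℕ, 0 < n ∧ f n = (x, i)
  · obtain ⟨n, hn0, hfn⟩ := hper
    have h := hmn n
    rw [hfn] at h
    have hlt : lam ^ n < 1 := pow_lt_one₀ hlam0.le hlam1 hn0.ne'
    have h2 : ‖u x i‖ * (1 - lam ^ n) = 0 := by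
      rw [mul_one_sub]
      linarith [h]
    rcases mul_eq_zero.mp h2 with h3 | h3
    · exact h3
    · linarith
  · have haux : ∀ a b : ℕ, a < b → f a = f b → False := by
      intro a b hab heq
      apply hper
      refine ⟨b - a, by omega, ?_⟩
      have hiter : f b = (prevStep σ)^[a] (f (b - a)) := by
        show (prevStep σ)^[b] (x, i) = (prevStep σ)^[a] ((prevStep σ)^[b - a] (x, i))
        rw [← Function.iterate_add_apply]
        congr 1
        omega
      exact (((prevStep σ).injective.iterate a) (heq.trans hiter)).symm
    have hinj : Function.Injective f := by
      intro a b hab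
      rcases Nat.lt_trichotomy a b with h | h | h
      · exact (haux a b h hab).elim
      · exact h
      · exact (haux b a h hab.symm).elim
    have hB : ((Set.Icc ((-M₀, -M₀) : Site) (M₀, M₀)) ×ˢ (Set.univ : Set Chir)).Finite :=
      (Set.finite_Icc _ _).prod Set.finite_univ
    have hT : (f ⁻¹' ((Set.Icc ((-M₀, -M₀) : Site) (M₀, M₀)) ×ˢ (Set.univ : Set Chir))).Finite :=
      hB.preimage hinj.injOn
    obtain ⟨N, hN⟩ := hT.bddAbove
    have hout' : ∀ n, N + 1 ≤ n → (f n).1 ∉ innerDom M₀ := by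
      intro n hn hmem
      have hmem' : n ∈ f ⁻¹' ((Set.Icc ((-M₀, -M₀) : Site) (M₀, M₀)) ×ˢ (Set.univ : Set Chir)) := by
        refine Set.mem_preimage.mpr ⟨Set.mem_Icc.mpr ⟨?_, ?_⟩, Set.mem_univ _⟩
        · exact Prod.le_def.mpr ⟨(abs_le.mp hmem.1).1, (abs_le.mp hmem.2).1⟩
        · exact Prod.le_def.mpr ⟨(abs_le.mp hmem.1).2, (abs_le.mp hmem.2).2⟩
      have := hN hmem'
      omega
    set s : Site := (f (N + 1)).1 with hsdef
    set c : Chir := (f (N + 1)).2 with hcdef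
    have hflight : ∀ k : ℕ, f (N + 1 + k) = (s - (k : ℤ) • dvec c, c) := by
      intro k
      induction k with
      | zero => simp [hsdef, hcdef]
      | succ k ih =>
        have heq : N + 1 + (k + 1) = (N + 1 + k) + 1 := by omega
        have hsite2 : f (N + 1 + (k + 1)) = prevStep σ (s - (k : ℤ) • dvec c, c) := by
          rw [heq, hfs, ih]
        have halg : s - (k : ℤ) • dvec c - dvec c = s - ((k : ℤ) + 1) • dvec c := by
          rw [add_smul, one_smul, sub_sub]
        have hyn : (prevStep σ (s - (k : ℤ) • dvec c, c)).1 ∉ innerDom M₀ := by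
          have := hout' (N + 1 + (k + 1)) (by omega)
          rwa [hsite2] at this
        have hyn' : (s - ((k : ℤ) + 1) • dvec c) ∉ innerDom M₀ := by
          have : (prevStep σ (s - (k : ℤ) • dvec c, c)).1 = s - ((k : ℤ) + 1) • dvec c := halg
          rwa [this] at hyn
        have hσ : ∀ j, σ (s - ((k : ℤ) + 1) • dvec c) j = j :=
          sigma_id_of_coin_one (hA1 _ hyn')
        have hsymm : (σ (s - ((k : ℤ) + 1) • dvec c)).symm c = c := by
          have h0 := hσ ((σ (s - ((k : ℤ) + 1) • dvec c)).symm c)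
          rw [Equiv.apply_symm_apply] at h0
          exact h0.symm
        rw [hsite2]
        show (s - (k : ℤ) • dvec c - dvec c,
            (σ (s - (k : ℤ) • dvec c - dvec c)).symm c) = _
        rw [halg, hsymm]
        have hcast : ((k + 1 : ℕ) : ℤ) = (k : ℤ) + 1 := by push_cast; ring
        rw [hcast]
    have hc4 : c = 0 ∨ c = 1 ∨ c = 2 ∨ c = 3 :=
      (by decide : ∀ j : Chir, j = 0 ∨ j = 1 ∨ j = 2 ∨ j = 3) c
    have hzero : ∃ n : ℕ, ‖u (f n).1 (f n).2‖ = 0 := by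
      rcases hc4 with hc0 | hc0 | hc0 | hc0
      · refine ⟨N + 1 + (M₀ + 1 - s.1).toNat, ?_⟩
        set k := (M₀ + 1 - s.1).toNat with hk
        have hkk : M₀ + 1 - s.1 ≤ (k : ℤ) := Int.self_le_toNat _
        rw [hflight k, hc0]
        have hsite : s - (k : ℤ) • dvec (0 : Chir) = ((s.1 + (k : ℤ) : ℤ), s.2) := by
          rw [Prod.ext_iff]
          constructor
          · show s.1 - (k : ℤ) • (-1 : ℤ) = s.1 + (k : ℤ)
            rw [smul_eq_mul]; ring
          · show s.2 - (k : ℤ) • (0 : ℤ) = s.2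
            rw [smul_eq_mul]; ring
        rw [hsite, h2 _ (show M₀ < s.1 + (k : ℤ) by omega)]
        exact norm_zero
      · refine ⟨N + 1 + (s.1 + M₀ + 1).toNat, ?_⟩
        set k := (s.1 + M₀ + 1).toNat with hk
        have hkk : s.1 + M₀ + 1 ≤ (k : ℤ) := Int.self_le_toNat _
        rw [hflight k, hc0]
        have hsite : s - (k : ℤ) • dvec (1 : Chir) = ((s.1 - (k : ℤ) : ℤ), s.2) := by
          rw [Prod.ext_iff]
          constructor
          · show s.1 - (k : ℤ) • (1 : ℤ) = s.1 - (k : ℤ)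
            rw [smul_eq_mul]; ring
          · show s.2 - (k : ℤ) • (0 : ℤ) = s.2
            rw [smul_eq_mul]; ring
        rw [hsite, h3 _ (show s.1 - (k : ℤ) < -M₀ by omega)]
        exact norm_zero
      · refine ⟨N + 1 + (M₀ + 1 - s.2).toNat, ?_⟩
        set k := (M₀ + 1 - s.2).toNat with hk
        have hkk : M₀ + 1 - s.2 ≤ (k : ℤ) := Int.self_le_toNat _
        rw [hflight k, hc0]
        have hsite : s - (k : ℤ) • dvec (2 : Chir) = (s.1, (s.2 + (k : ℤ) : ℤ)) := by
          rw [Prod.ext_iff]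
          constructor
          · show s.1 - (k : ℤ) • (0 : ℤ) = s.1
            rw [smul_eq_mul]; ring
          · show s.2 - (k : ℤ) • (-1 : ℤ) = s.2 + (k : ℤ)
            rw [smul_eq_mul]; ring
        rw [hsite, h6 _ (show M₀ < s.2 + (k : ℤ) by omega)]
        exact norm_zero
      · refine ⟨N + 1 + (s.2 + M₀ + 1).toNat, ?_⟩
        set k := (s.2 + M₀ + 1).toNat with hk
        have hkk : s.2 + M₀ + 1 ≤ (k : ℤ) := Int.self_le_toNat _
        rw [hflight k, hc0]
        have hsite : s - (k : ℤ) • dvec (3 : Chir) = (s.1, (s.2 - (k : ℤ) : ℤ)) := by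
          rw [Prod.ext_iff]
          constructor
          · show s.1 - (k : ℤ) • (0 : ℤ) = s.1
            rw [smul_eq_mul]; ring
          · show s.2 - (k : ℤ) • (1 : ℤ) = s.2 - (k : ℤ)
            rw [smul_eq_mul]; ring
        rw [hsite, h7 _ (show s.2 - (k : ℤ) < -M₀ by omega)]
        exact norm_zero
    obtain ⟨n, hn⟩ := hzero
    have hh := hmn n
    rw [hn] at hh
    have hne : lam ^ n ≠ 0 := pow_ne_zero _ (ne_of_gt hlam0)
    rcases mul_eq_zero.mp hh.symm with h0 | h0
    · exact absurd h0 hne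
    · exact h0

/-- elastic quantum walks have no resonances other than eigenvalues (the only
outgoing solution for `Im κ < 0` is `0`), and non-trapping elastic walks have no eigenvalues. -/
theorem elastic_no_resonances_and_nontrapping_no_eigenvalues
    (M₀ : ℤ) (hM₀ : 1 ≤ M₀)
    (σ : Site → Equiv.Perm Chir) (α : Site → Chir → ℝ)
    (hA1 : ∀ x, x ∉ innerDom M₀ → elasticCoin σ α x = 1)
    (S Cop : H →L[ℂ] H) (hS : IsShiftOp S) (hCop : IsCoinOp Cop (elasticCoin σ α))
    (Uel : unitary (H →L[ℂ] H)) (hUel : (Uel : H →L[ℂ] H) = S.comp Cop)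
    (q : ℤ → Site → Chir → Site) (p : ℤ → Site → Chir → Chir)
    (htraj : IsTrajectory Uel q p) :
    (∀ κ : ℂ, κ.im < 0 → ∀ u : Site → Chir → ℂ, IsOutgoing M₀ κ u →
      IsPtSolution (elasticCoin σ α) κ u → ∀ (x : Site) (i : Chir), u x i = 0) ∧
    ((∀ (y : Site) (j : Chir),
        ¬∃ t₁ t₂ : ℤ, t₁ < t₂ ∧ q t₁ y j = q t₂ y j ∧ p t₁ y j = p t₂ y j) →
      ∀ (z : ℂ) (u : H), (Uel : H →L[ℂ] H) u = z • u → u = 0) := by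
  constructor
  · intro κ hκ u hout hsol
    exact elastic_no_outgoing M₀ σ α hA1 κ hκ u hout hsol
  · intro hnt z u hu
    classical
    by_contra hu0
    set Vop : H →L[ℂ] H := (Uel : H →L[ℂ] H) with hVdef
    have hstar : star Vop * Vop = 1 := Unitary.star_mul_self_of_mem Uel.prop
    have hVV : ∀ w : H, star Vop (Vop w) = w := by
      intro w
      have h0 := congrArg (fun T : H →L[ℂ] H => T w) hstar
      simpa [ContinuousLinearMap.mul_apply] using h0
    have hz : z ≠ 0 := by
      rintro rfl
      apply hu0
      have h0 := hVV u
      rw [hu, zero_smul, map_zero] at h0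
      exact h0.symm
    have hex : ∃ (y : Site) (j : Chir), u y j ≠ 0 := by
      by_contra h
      push_neg at h
      apply hu0
      apply lp.ext
      funext x'
      have hx' : u x' = (0 : V) := by ext i; exact h x' i
      simpa using hx'
    obtain ⟨y, j, hyj⟩ := hex
    set r : ℝ := ‖u y j‖ with hrdef
    have hrpos : 0 < r := norm_pos_iff.mpr hyj
    have hnu : Vop u = z • u := hu
    have hVnorm : ∀ w : H, ‖Vop w‖ = ‖w‖ := by
      intro w
      have h1 : inner ℂ (Vop w) (Vop w) = inner ℂ w w := by
        rw [← ContinuousLinearMap.adjoint_inner_right, ← ContinuousLinearMap.star_eq_adjoint,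
          hVV]
      rw [inner_self_eq_norm_sq_to_K, inner_self_eq_norm_sq_to_K] at h1
      have h2 : (‖Vop w‖ : ℝ) ^ 2 = ‖w‖ ^ 2 := by exact_mod_cast h1
      calc ‖Vop w‖ = Real.sqrt (‖Vop w‖ ^ 2) := (Real.sqrt_sq (norm_nonneg _)).symm
        _ = Real.sqrt (‖w‖ ^ 2) := by rw [h2]
        _ = ‖w‖ := Real.sqrt_sq (norm_nonneg _)
    have hz1 : ‖z‖ = 1 := by
      have h0 := hVnorm u
      rw [hnu, norm_smul] at h0
      have hun : ‖u‖ ≠ 0 := by simpa [norm_eq_zero] using hu0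
      have h1 : ‖z‖ * ‖u‖ = 1 * ‖u‖ := by rw [h0, one_mul]
      exact mul_right_cancel₀ hun h1
    have hstaru : star Vop u = z⁻¹ • u := by
      have h1 := hVV u
      rw [hnu, map_smul] at h1
      calc star Vop u = z⁻¹ • (z • star Vop u) := by
            rw [smul_smul, inv_mul_cancel₀ hz, one_smul]
        _ = z⁻¹ • u := by rw [h1]
    have hpow : ∀ t : ℕ, ((star Vop) ^ t) u = (z⁻¹) ^ t • u := by
      intro t
      induction t with
      | zero => simp
      | succ t ih =>
        rw [pow_succ, ContinuousLinearMap.mul_apply, hstaru, map_smul, ih, smul_smul,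
          pow_succ, mul_comm]
    have hkey : ∀ t : ℕ, ‖u (q (t : ℤ) y j) (p (t : ℤ) y j)‖ = r := by
      intro t
      obtain ⟨c, hc1, hc⟩ := htraj.2 (t : ℤ) y j
      have hAeq : (((Uel ^ (t : ℤ) : unitary (H →L[ℂ] H))) : H →L[ℂ] H) = Vop ^ t := by
        rw [zpow_natCast]
        exact SubmonoidClass.coe_pow Uel t
      have hdelta : ∀ (x' : Site) (i' : Chir) (w : H),
          inner ℂ (deltaState x' i') w = w x' i' := by
        intro x' i' w
        rw [deltaState, lp.inner_single_left, EuclideanSpace.inner_single_left]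
        simp
      have hinner1 : inner ℂ ((((Uel ^ (t : ℤ) : unitary (H →L[ℂ] H))) : H →L[ℂ] H)
            (deltaState y j)) u
          = (starRingEnd ℂ) c * u (q (t : ℤ) y j) (p (t : ℤ) y j) := by
        rw [hc, inner_smul_left, hdelta]
      have hinner2 : inner ℂ ((((Uel ^ (t : ℤ) : unitary (H →L[ℂ] H))) : H →L[ℂ] H)
            (deltaState y j)) u
          = (z⁻¹) ^ t * u y j := by
        rw [hAeq, ← ContinuousLinearMap.adjoint_inner_right,
          ← ContinuousLinearMap.star_eq_adjoint, star_pow, hpow t, inner_smul_right, hdelta]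
      have heq := hinner1.symm.trans hinner2
      have hn := congrArg norm heq
      rw [norm_mul, norm_mul, RCLike.norm_conj, hc1, one_mul, norm_pow, norm_inv, hz1] at hn
      simpa using hn
    have hmem : Memℓp (fun x' : Site => u x') 2 := lp.memℓp u
    have hsum : Summable (fun x' : Site => ‖u x'‖ ^ ((2 : ENNReal)).toReal) :=
      hmem.summable (by norm_num)
    have hsum2 : Summable (fun x' : Site => ‖u x'‖ ^ (2 : ℝ)) := by
      have h0 : ((2 : ENNReal)).toReal = (2 : ℝ) := by norm_num
      rwa [h0] at hsum
    have hcoord : ∀ (v : V) (i : Chir), ‖v i‖ ≤ ‖v‖ := by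
      intro v i
      rw [EuclideanSpace.norm_eq]
      have h1 : ‖v i‖ ^ 2 ≤ ∑ k : Chir, ‖v k‖ ^ 2 :=
        Finset.single_le_sum (f := fun k : Chir => ‖v k‖ ^ 2) (fun k _ => sq_nonneg _) (Finset.mem_univ i)
      calc ‖v i‖ = Real.sqrt (‖v i‖ ^ 2) := (Real.sqrt_sq (norm_nonneg _)).symm
        _ ≤ Real.sqrt (∑ k : Chir, ‖v k‖ ^ 2) := Real.sqrt_le_sqrt h1
    have hev : {x' : Site | r ^ (2 : ℝ) ≤ ‖u x'‖ ^ (2 : ℝ)}.Finite := by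
      have ht := hsum2.tendsto_cofinite_zero
      have hε : 0 < r ^ (2 : ℝ) := Real.rpow_pos_of_pos hrpos _
      have he : ∀ᶠ x' in Filter.cofinite, ‖u x'‖ ^ (2 : ℝ) < r ^ (2 : ℝ) :=
        ht.eventually (gt_mem_nhds hε)
      rw [Filter.eventually_cofinite] at he
      exact he.subset fun x' hx' => not_lt.mpr hx'
    have hsubF : Set.range (fun t : ℕ => q (t : ℤ) y j)
        ⊆ {x' : Site | r ^ (2 : ℝ) ≤ ‖u x'‖ ^ (2 : ℝ)} := by
      rintro _ ⟨t, rfl⟩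
      have h1 : r ≤ ‖u (q (t : ℤ) y j)‖ := by
        rw [← hkey t]
        exact hcoord _ _
      exact Real.rpow_le_rpow hrpos.le h1 (by norm_num)
    have hAfin : (Set.range fun t : ℕ => q (t : ℤ) y j).Finite := hev.subset hsubF
    have hginj : Function.Injective (fun t : ℕ => (q (t : ℤ) y j, p (t : ℤ) y j)) := by
      intro a b hab
      rcases Nat.lt_trichotomy a b with h | h | h
      · exact absurd ⟨(a : ℤ), (b : ℤ), by exact_mod_cast h,
          (Prod.ext_iff.mp hab).1, (Prod.ext_iff.mp hab).2⟩ (hnt y j)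
      · exact h
      · exact absurd ⟨(b : ℤ), (a : ℤ), by exact_mod_cast h,
          (Prod.ext_iff.mp hab).1.symm, (Prod.ext_iff.mp hab).2.symm⟩ (hnt y j)
    have hrange : Set.range (fun t : ℕ => (q (t : ℤ) y j, p (t : ℤ) y j))
        ⊆ (Set.range fun t : ℕ => q (t : ℤ) y j) ×ˢ (Set.univ : Set Chir) := by
      rintro _ ⟨t, rfl⟩
      exact ⟨⟨t, rfl⟩, Set.mem_univ _⟩
    exact Set.infinite_range_of_injective hginj
      ((hAfin.prod Set.finite_univ).subset hrange)


end QWPaper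
end
end

section
/- Let U_np = U_i ⊕ U_e be a quantum walk with a non-penetrable barrier and fix θ ∈ ℂ with Im θ < 0. For every κ ∈ ℂ with Im κ > Im θ, the operator U_e(θ) − e^{−iκ}·Id is boundedly invertible on H_e (in particular U_e has no resonances), and for every compact set Z ⊂ {κ ∈ ℂ : Im κ > Im θ} there exists γ > 0, depending only on Z, such that ‖(U_e(θ) − e^{−iκ})^{−1}‖_{B(H_e)} ≤ γ for all κ ∈ Z. -/
noncomputable section

namespace QWPaper

open Complex
open scoped ENNReal

-- ### Auxiliary lemmas ###

-- basic lp helpers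
lemma two_toReal : ((2 : ℝ≥0∞)).toReal = 2 := by norm_num

lemma rpow_two_eq (y : ℝ) : y ^ ((2 : ℝ≥0∞)).toReal = y ^ (2 : ℕ) := by
  rw [two_toReal]
  rw [show ((2:ℝ)) = ((2:ℕ):ℝ) by norm_num, Real.rpow_natCast]

lemma lp_summable (f : H) : Summable (fun x : Site => ‖f x‖ ^ (2:ℕ)) := by
  have := (lp.memℓp f).summable (p := 2) (by norm_num)
  simpa [rpow_two_eq] using this

lemma lp_normsq (f : H) : ‖f‖ ^ (2:ℕ) = ∑' x : Site, ‖f x‖ ^ (2:ℕ) := by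
  have := lp.norm_rpow_eq_tsum (p := 2) (by norm_num) f
  simpa [rpow_two_eq] using this

lemma lp_norm_le {f : H} {C : ℝ} (hC : 0 ≤ C) (h : ∑' x : Site, ‖f x‖ ^ (2:ℕ) ≤ C ^ (2:ℕ)) :
    ‖f‖ ≤ C := by
  refine lp.norm_le_of_tsum_le (p := 2) (by norm_num) hC ?_
  simpa [rpow_two_eq] using h

lemma coord_summable (f : H) (i : Chir) : Summable (fun x : Site => ‖f x i‖ ^ (2:ℕ)) := by
  refine Summable.of_nonneg_of_le (fun x => by positivity) (fun x => ?_) (lp_summable f)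
  have h1 : ‖f x i‖ ^ (2:ℕ) ≤ ∑ j : Chir, ‖f x j‖ ^ (2:ℕ) :=
    Finset.single_le_sum (f := fun j => ‖f x j‖ ^ (2:ℕ)) (fun j _ => by positivity)
      (Finset.mem_univ i)
  calc ‖f x i‖ ^ (2:ℕ) ≤ ∑ j : Chir, ‖f x j‖ ^ (2:ℕ) := h1
    _ = ‖f x‖ ^ (2:ℕ) := by
        rw [EuclideanSpace.norm_eq, Real.sq_sqrt (by positivity)]

lemma Vnormsq (v : V) : ‖v‖ ^ (2:ℕ) = ∑ i : Chir, ‖v i‖ ^ (2:ℕ) := by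
  rw [EuclideanSpace.norm_eq, Real.sq_sqrt (by positivity)]

lemma V_norm_le_of_sq {v : V} {c : ℝ} (hc : 0 ≤ c) (h : ∑ i : Chir, ‖v i‖ ^ (2:ℕ) ≤ c ^ (2:ℕ)) :
    ‖v‖ ≤ c := by
  rw [EuclideanSpace.norm_eq]
  calc Real.sqrt (∑ i : Chir, ‖v i‖ ^ 2) ≤ Real.sqrt (c ^ 2) := Real.sqrt_le_sqrt h
    _ = c := by rw [Real.sqrt_sq hc]

lemma norm_le_pointwise {v w : H} (h : ∀ x : Site, ‖v x‖ ≤ ‖w x‖) : ‖v‖ ≤ ‖w‖ := by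
  refine lp_norm_le (norm_nonneg w) ?_
  rw [lp_normsq w]
  exact Summable.tsum_le_tsum (fun x => by gcongr; exact h x)
    (Summable.of_nonneg_of_le (fun x => by positivity)
      (fun x => by gcongr; exact h x) (lp_summable w)) (lp_summable w)


/-- translation equivalence of the lattice -/
def shiftE (a b : ℤ) : Site ≃ Site where
  toFun x := (x.1 + a, x.2 + b)
  invFun x := (x.1 - a, x.2 - b)
  left_inv x := by simp
  right_inv x := by simp

lemma shift_tsum (f : Site → ℝ) (a b : ℤ) :
    ∑' x : Site, f (x.1 + a, x.2 + b) = ∑' x : Site, f x :=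
  (shiftE a b).tsum_eq f

lemma shift_summable {f : Site → ℝ} (hf : Summable f) (a b : ℤ) :
    Summable (fun x : Site => f (x.1 + a, x.2 + b)) :=
  ((shiftE a b).summable_iff (f := f)).mpr hf

lemma shift_norm_le {S : H →L[ℂ] H} (hS : IsShiftOp S) (v : H) : ‖S v‖ ≤ ‖v‖ := by
  refine lp_norm_le (norm_nonneg v) ?_
  have h0 : ∀ x : Site, ‖(S v) x‖ ^ (2:ℕ) =
      ‖v (x.1 + 1, x.2) 0‖ ^ (2:ℕ) + ‖v (x.1 - 1, x.2) 1‖ ^ (2:ℕ)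
      + ‖v (x.1, x.2 + 1) 2‖ ^ (2:ℕ) + ‖v (x.1, x.2 - 1) 3‖ ^ (2:ℕ) := by
    intro x
    rw [Vnormsq, Fin.sum_univ_four, (hS v x).1, (hS v x).2.1, (hS v x).2.2.1, (hS v x).2.2.2]
  have s0 : Summable (fun x : Site => ‖v (x.1 + 1, x.2) 0‖ ^ (2:ℕ)) := by
    simpa using shift_summable (coord_summable v 0) 1 0
  have s1 : Summable (fun x : Site => ‖v (x.1 - 1, x.2) 1‖ ^ (2:ℕ)) := by
    simpa [sub_eq_add_neg] using shift_summable (coord_summable v 1) (-1) 0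
  have s2 : Summable (fun x : Site => ‖v (x.1, x.2 + 1) 2‖ ^ (2:ℕ)) := by
    simpa using shift_summable (coord_summable v 2) 0 1
  have s3 : Summable (fun x : Site => ‖v (x.1, x.2 - 1) 3‖ ^ (2:ℕ)) := by
    simpa [sub_eq_add_neg] using shift_summable (coord_summable v 3) 0 (-1)
  have key : ∑' x : Site, ‖(S v) x‖ ^ (2:ℕ) = ∑' x : Site, ‖v x‖ ^ (2:ℕ) := by
    calc ∑' x : Site, ‖(S v) x‖ ^ (2:ℕ)
        = ∑' x : Site, (‖v (x.1 + 1, x.2) 0‖ ^ (2:ℕ) + ‖v (x.1 - 1, x.2) 1‖ ^ (2:ℕ)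
          + ‖v (x.1, x.2 + 1) 2‖ ^ (2:ℕ) + ‖v (x.1, x.2 - 1) 3‖ ^ (2:ℕ)) := by
          exact tsum_congr h0
      _ = (∑' x : Site, ‖v (x.1 + 1, x.2) 0‖ ^ (2:ℕ)) + (∑' x : Site, ‖v (x.1 - 1, x.2) 1‖ ^ (2:ℕ))
          + (∑' x : Site, ‖v (x.1, x.2 + 1) 2‖ ^ (2:ℕ))
          + (∑' x : Site, ‖v (x.1, x.2 - 1) 3‖ ^ (2:ℕ)) := by
          rw [Summable.tsum_add (Summable.add (Summable.add s0 s1) s2) s3,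
            Summable.tsum_add (Summable.add s0 s1) s2, Summable.tsum_add s0 s1]
      _ = (∑' x : Site, ‖v x 0‖ ^ (2:ℕ)) + (∑' x : Site, ‖v x 1‖ ^ (2:ℕ))
          + (∑' x : Site, ‖v x 2‖ ^ (2:ℕ)) + (∑' x : Site, ‖v x 3‖ ^ (2:ℕ)) := by
          rw [show (∑' x : Site, ‖v (x.1 + 1, x.2) 0‖ ^ (2:ℕ)) = ∑' x : Site, ‖v x 0‖ ^ (2:ℕ) by
              simpa using shift_tsum (fun x => ‖v x 0‖ ^ (2:ℕ)) 1 0]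
          rw [show (∑' x : Site, ‖v (x.1 - 1, x.2) 1‖ ^ (2:ℕ)) = ∑' x : Site, ‖v x 1‖ ^ (2:ℕ) by
              simpa [sub_eq_add_neg] using shift_tsum (fun x => ‖v x 1‖ ^ (2:ℕ)) (-1) 0]
          rw [show (∑' x : Site, ‖v (x.1, x.2 + 1) 2‖ ^ (2:ℕ)) = ∑' x : Site, ‖v x 2‖ ^ (2:ℕ) by
              simpa using shift_tsum (fun x => ‖v x 2‖ ^ (2:ℕ)) 0 1]
          rw [show (∑' x : Site, ‖v (x.1, x.2 - 1) 3‖ ^ (2:ℕ)) = ∑' x : Site, ‖v x 3‖ ^ (2:ℕ) by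
              simpa [sub_eq_add_neg] using shift_tsum (fun x => ‖v x 3‖ ^ (2:ℕ)) 0 (-1)]
      _ = ∑' x : Site, (‖v x 0‖ ^ (2:ℕ) + ‖v x 1‖ ^ (2:ℕ) + ‖v x 2‖ ^ (2:ℕ) + ‖v x 3‖ ^ (2:ℕ)) := by
          rw [Summable.tsum_add (Summable.add (Summable.add (coord_summable v 0) (coord_summable v 1))
              (coord_summable v 2)) (coord_summable v 3),
            Summable.tsum_add (Summable.add (coord_summable v 0) (coord_summable v 1)) (coord_summable v 2),
            Summable.tsum_add (coord_summable v 0) (coord_summable v 1)]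
      _ = ∑' x : Site, ‖v x‖ ^ (2:ℕ) := by
          refine tsum_congr fun x => ?_
          rw [Vnormsq, Fin.sum_univ_four]
  rw [key, ← lp_normsq]

/-- the diagonal entries of `Dmat`. -/
def dv (θ : ℂ) (x : Site) : Chir → ℂ :=
  ![Complex.exp (Complex.I * θ * x.1), Complex.exp (-(Complex.I * θ * x.1)),
    Complex.exp (Complex.I * θ * x.2), Complex.exp (-(Complex.I * θ * x.2))]

lemma Dmat_eq (θ : ℂ) (x : Site) : Dmat θ x = Matrix.diagonal (dv θ x) := rfl

lemma exp_pair {a b : ℂ} (h : a + b = 0) : Complex.exp a * Complex.exp b = 1 := by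
  rw [← Complex.exp_add, h, Complex.exp_zero]

lemma dv_mul (θ : ℂ) (x : Site) (i : Chir) : dv θ x i * dv (-θ) x i = 1 := by
  fin_cases i <;> exact exp_pair (by ring)

lemma Dmat_inv (θ : ℂ) (x : Site) : (Dmat θ x)⁻¹ = Dmat (-θ) x := by
  refine Matrix.inv_eq_right_inv ?_
  rw [Dmat_eq, Dmat_eq, Matrix.diagonal_mul_diagonal]
  have : (fun i => dv θ x i * dv (-θ) x i) = fun _ => (1:ℂ) := funext fun i => dv_mul θ x i
  rw [this, Matrix.diagonal_one]

lemma transCoin_apply (θ : ℂ) (C : Site → Matrix Chir Chir ℂ) (x : Site) (i j : Chir) :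
    transCoin θ C x i j = dv θ x i * C x i j * dv (-θ) x j := by
  rw [transCoin, Dmat_inv, Dmat_eq, Dmat_eq, Matrix.mul_diagonal, Matrix.diagonal_mul]

lemma re_aux (θ : ℂ) (n : ℤ) : (Complex.I * θ * (n:ℂ)).re = -θ.im * n := by
  simp [Complex.mul_re]

lemma norm_dv0 (θ : ℂ) (x : Site) : ‖dv θ x 0‖ = Real.exp (-θ.im * x.1) := by
  show ‖Complex.exp (Complex.I * θ * (x.1:ℂ))‖ = _
  rw [Complex.norm_exp, re_aux]
lemma norm_dv1 (θ : ℂ) (x : Site) : ‖dv θ x 1‖ = Real.exp (θ.im * x.1) := by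
  show ‖Complex.exp (-(Complex.I * θ * (x.1:ℂ)))‖ = _
  rw [Complex.norm_exp, Complex.neg_re, re_aux]; congr 1; ring
lemma norm_dv2 (θ : ℂ) (x : Site) : ‖dv θ x 2‖ = Real.exp (-θ.im * x.2) := by
  show ‖Complex.exp (Complex.I * θ * (x.2:ℂ))‖ = _
  rw [Complex.norm_exp, re_aux]
lemma norm_dv3 (θ : ℂ) (x : Site) : ‖dv θ x 3‖ = Real.exp (θ.im * x.2) := by
  show ‖Complex.exp (-(Complex.I * θ * (x.2:ℂ)))‖ = _
  rw [Complex.norm_exp, Complex.neg_re, re_aux]; congr 1; ring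

lemma col_sum {Cnp : Site → Matrix Chir Chir ℂ} (hCnp : IsUnitaryCoin Cnp) (x : Site) (j : Chir) :
    ∑ i : Chir, ‖Cnp x i j‖ ^ (2:ℕ) = 1 := by
  have h : star (Cnp x) * Cnp x = 1 := (Unitary.mem_iff.mp (hCnp x)).1
  have h2 : (star (Cnp x) * Cnp x) j j = 1 := by rw [h]; simp [Matrix.one_apply]
  rw [Matrix.mul_apply] at h2
  have h3 : ∀ k : Chir, (star (Cnp x)) j k * Cnp x k j = ((‖Cnp x k j‖ ^ (2:ℕ) : ℝ) : ℂ) := by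
    intro k
    rw [Matrix.star_apply, Complex.star_def, mul_comm, Complex.mul_conj]
    rw [Complex.normSq_eq_norm_sq]
  rw [Finset.sum_congr rfl (fun k _ => h3 k)] at h2
  exact_mod_cast (by exact_mod_cast h2 : ((∑ i : Chir, ‖Cnp x i j‖ ^ (2:ℕ) : ℝ) : ℂ) = 1)


lemma dv_bound {θ : ℂ} {M₀ : ℤ} (hθ : θ.im < 0) (x : Site)
    (hx1le : (x.1:ℝ) ≤ (M₀:ℝ)) (hx1ge : -(M₀:ℝ) ≤ (x.1:ℝ))
    (hx2le : (x.2:ℝ) ≤ (M₀:ℝ)) (hx2ge : -(M₀:ℝ) ≤ (x.2:ℝ)) (i : Chir) :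
    ‖dv θ x i‖ ≤ Real.exp (-θ.im * (M₀:ℝ)) := by
  fin_cases i
  · show ‖dv θ x 0‖ ≤ _
    rw [norm_dv0, Real.exp_le_exp]; nlinarith
  · show ‖dv θ x 1‖ ≤ _
    rw [norm_dv1, Real.exp_le_exp]; nlinarith
  · show ‖dv θ x 2‖ ≤ _
    rw [norm_dv2, Real.exp_le_exp]; nlinarith
  · show ‖dv θ x 3‖ ≤ _
    rw [norm_dv3, Real.exp_le_exp]; nlinarith

lemma hd_of {θ : ℂ} {M₀ : ℤ} (x : Site) (j₀ : Chir)
    (h1 : ∀ i : Chir, ‖dv θ x i‖ ≤ Real.exp (-θ.im * (M₀:ℝ)))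
    (h2 : ‖dv (-θ) x j₀‖ = Real.exp (θ.im * (M₀:ℝ))) (i : Chir) :
    ‖dv θ x i‖ * ‖dv (-θ) x j₀‖ ≤ 1 := by
  calc ‖dv θ x i‖ * ‖dv (-θ) x j₀‖
      ≤ Real.exp (-θ.im * (M₀:ℝ)) * Real.exp (θ.im * (M₀:ℝ)) :=
        mul_le_mul (h1 i) (le_of_eq h2) (norm_nonneg _) (Real.exp_nonneg _)
    _ = 1 := by
        rw [← Real.exp_add, show -θ.im * (M₀:ℝ) + θ.im * (M₀:ℝ) = 0 by ring, Real.exp_zero]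

lemma dvm_eq0 {θ : ℂ} {M₀ : ℤ} {x : Site} (hx1 : x.1 = M₀) :
    ‖dv (-θ) x 0‖ = Real.exp (θ.im * (M₀:ℝ)) := by
  rw [norm_dv0]; congr 1; rw [hx1]; rw [Complex.neg_im]; push_cast; ring
lemma dvm_eq1 {θ : ℂ} {M₀ : ℤ} {x : Site} (hx1 : x.1 = -M₀) :
    ‖dv (-θ) x 1‖ = Real.exp (θ.im * (M₀:ℝ)) := by
  rw [norm_dv1]; congr 1; rw [hx1]; rw [Complex.neg_im]; push_cast; ring
lemma dvm_eq2 {θ : ℂ} {M₀ : ℤ} {x : Site} (hx2 : x.2 = M₀) :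
    ‖dv (-θ) x 2‖ = Real.exp (θ.im * (M₀:ℝ)) := by
  rw [norm_dv2]; congr 1; rw [hx2]; rw [Complex.neg_im]; push_cast; ring
lemma dvm_eq3 {θ : ℂ} {M₀ : ℤ} {x : Site} (hx2 : x.2 = -M₀) :
    ‖dv (-θ) x 3‖ = Real.exp (θ.im * (M₀:ℝ)) := by
  rw [norm_dv3]; congr 1; rw [hx2]; rw [Complex.neg_im]; push_cast; ring

lemma kbar_case {θ : ℂ} {Cnp : Site → Matrix Chir Chir ℂ} {Mθ : H →L[ℂ] H}
    (hCnp : IsUnitaryCoin Cnp) (hMθ : IsCoinOp Mθ (transCoin θ Cnp))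
    (u : H) (x : Site) (j₀ : Chir)
    (hz : ∀ j : Chir, j ≠ j₀ → u x j = 0)
    (hd : ∀ i : Chir, ‖dv θ x i‖ * ‖dv (-θ) x j₀‖ ≤ 1) :
    ‖(Mθ u) x‖ ≤ ‖u x‖ := by
  have hcomp : ∀ i : Chir, (Mθ u) x i = transCoin θ Cnp x i j₀ * u x j₀ := by
    intro i
    rw [hMθ u x i]
    exact Finset.sum_eq_single_of_mem j₀ (Finset.mem_univ j₀)
      (fun b _ hb => by rw [hz b hb, mul_zero])
  have hbound : ∀ i : Chir, ‖(Mθ u) x i‖ ≤ ‖Cnp x i j₀‖ * ‖u x j₀‖ := by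
    intro i
    rw [hcomp i, transCoin_apply]
    rw [norm_mul, norm_mul, norm_mul]
    calc ‖dv θ x i‖ * ‖Cnp x i j₀‖ * ‖dv (-θ) x j₀‖ * ‖u x j₀‖
        = (‖dv θ x i‖ * ‖dv (-θ) x j₀‖) * (‖Cnp x i j₀‖ * ‖u x j₀‖) := by ring
      _ ≤ 1 * (‖Cnp x i j₀‖ * ‖u x j₀‖) := by
          apply mul_le_mul_of_nonneg_right (hd i); positivity
      _ = ‖Cnp x i j₀‖ * ‖u x j₀‖ := one_mul _
  refine V_norm_le_of_sq (norm_nonneg _) ?_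
  calc ∑ i : Chir, ‖(Mθ u) x i‖ ^ (2:ℕ)
      ≤ ∑ i : Chir, ‖Cnp x i j₀‖ ^ (2:ℕ) * ‖u x j₀‖ ^ (2:ℕ) := by
        refine Finset.sum_le_sum fun i _ => ?_
        rw [← mul_pow]
        exact pow_le_pow_left₀ (norm_nonneg _) (hbound i) 2
    _ = (∑ i : Chir, ‖Cnp x i j₀‖ ^ (2:ℕ)) * ‖u x j₀‖ ^ (2:ℕ) := by rw [← Finset.sum_mul]
    _ = ‖u x j₀‖ ^ (2:ℕ) := by rw [col_sum hCnp x j₀, one_mul]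
    _ ≤ ∑ i : Chir, ‖u x i‖ ^ (2:ℕ) :=
        Finset.single_le_sum (f := fun i => ‖u x i‖ ^ (2:ℕ)) (fun i _ => by positivity)
          (Finset.mem_univ j₀)
    _ = ‖u x‖ ^ (2:ℕ) := (Vnormsq (u x)).symm

lemma coin_pointwise {θ : ℂ} {M₀ : ℤ} {Cnp : Site → Matrix Chir Chir ℂ} {Mθ : H →L[ℂ] H}
    (hθ : θ.im < 0) (hCnp : IsUnitaryCoin Cnp) (hA1 : SatisfiesA1 Cnp M₀)
    (hMθ : IsCoinOp Mθ (transCoin θ Cnp))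
    (u : H) (hu : memHe M₀ u) (x : Site) :
    ‖(Mθ u) x‖ ≤ ‖u x‖ := by
  obtain ⟨h1, h2, h3, h4, h5⟩ := hu
  by_cases hin : x ∈ innerDom M₀
  · obtain ⟨ha1, ha2⟩ := hin
    have hx1le : (x.1 : ℝ) ≤ (M₀ : ℝ) := by exact_mod_cast (abs_le.mp ha1).2
    have hx1ge : (-(M₀:ℝ)) ≤ (x.1 : ℝ) := by exact_mod_cast (abs_le.mp ha1).1
    have hx2le : (x.2 : ℝ) ≤ (M₀ : ℝ) := by exact_mod_cast (abs_le.mp ha2).2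
    have hx2ge : (-(M₀:ℝ)) ≤ (x.2 : ℝ) := by exact_mod_cast (abs_le.mp ha2).1
    have hdb := dv_bound (M₀ := M₀) hθ x hx1le hx1ge hx2le hx2ge
    by_cases hk1p : x ∈ K1p M₀
    · refine kbar_case hCnp hMθ u x 0 ?_ (hd_of x 0 hdb (dvm_eq0 hk1p.1))
      intro j hj
      fin_cases j
      · exact absurd rfl hj
      · exact h3 x (Set.mem_union_left _ (Set.mem_union_left _ hk1p))
      · exact h4 x (Set.mem_union_left _ (Set.mem_union_right _ hk1p))
      · exact h5 x (Set.mem_union_left _ (Set.mem_union_right _ hk1p))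
    · by_cases hk1m : x ∈ K1m M₀
      · refine kbar_case hCnp hMθ u x 1 ?_ (hd_of x 1 hdb (dvm_eq1 hk1m.1))
        intro j hj
        fin_cases j
        · exact h2 x (Set.mem_union_left _ (Set.mem_union_left _ hk1m))
        · exact absurd rfl hj
        · exact h4 x (Set.mem_union_right _ hk1m)
        · exact h5 x (Set.mem_union_right _ hk1m)
      · by_cases hk2p : x ∈ K2p M₀
        · refine kbar_case hCnp hMθ u x 2 ?_ (hd_of x 2 hdb (dvm_eq2 hk2p.1))
          intro j hj
          fin_cases j
          · exact h2 x (Set.mem_union_left _ (Set.mem_union_right _ hk2p))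
          · exact h3 x (Set.mem_union_left _ (Set.mem_union_right _ hk2p))
          · exact absurd rfl hj
          · exact h5 x (Set.mem_union_left _ (Set.mem_union_left _ hk2p))
        · by_cases hk2m : x ∈ K2m M₀
          · refine kbar_case hCnp hMθ u x 3 ?_ (hd_of x 3 hdb (dvm_eq3 hk2m.1))
            intro j hj
            fin_cases j
            · exact h2 x (Set.mem_union_right _ hk2m)
            · exact h3 x (Set.mem_union_right _ hk2m)
            · exact h4 x (Set.mem_union_left _ (Set.mem_union_left _ hk2m))
            · exact absurd rfl hj
          · have hnout : x ∉ outerDom M₀ := by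
              intro hout
              rcases hout with h | h
              · exact h ⟨ha1, ha2⟩
              · rcases h with ((h | h) | h) | h
                exacts [hk1p h, hk1m h, hk2p h, hk2m h]
            have hz : ∀ i : Chir, u x i = 0 := h1 x hnout
            refine V_norm_le_of_sq (norm_nonneg _) ?_
            have hm : ∀ i : Chir, (Mθ u) x i = 0 := by
              intro i
              rw [hMθ u x i]
              exact Finset.sum_eq_zero fun j _ => by rw [hz j, mul_zero]
            calc ∑ i : Chir, ‖(Mθ u) x i‖ ^ (2:ℕ)
                = ∑ _i : Chir, (0:ℝ) := by
                  refine Finset.sum_congr rfl fun i _ => ?_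
                  rw [hm i, norm_zero]; ring
              _ = 0 := by simp
              _ ≤ ‖u x‖ ^ (2:ℕ) := by positivity
  · have hC1 : Cnp x = 1 := hA1.2 x hin
    have hcomp : ∀ i : Chir, (Mθ u) x i = u x i := by
      intro i
      rw [hMθ u x i]
      have hterm : ∀ j : Chir, transCoin θ Cnp x i j * u x j
          = (if j = i then u x i else 0) := by
        intro j
        rw [transCoin_apply, hC1]
        by_cases hij : j = i
        · subst hij
          rw [Matrix.one_apply_eq, if_pos rfl]
          calc dv θ x j * 1 * dv (-θ) x j * u x j
              = (dv θ x j * dv (-θ) x j) * u x j := by ring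
            _ = u x j := by rw [dv_mul θ x j, one_mul]
        · rw [if_neg hij, Matrix.one_apply_ne' hij]
          ring
      rw [Finset.sum_congr rfl fun j _ => hterm j, Finset.sum_ite_eq']
      simp
    refine V_norm_le_of_sq (norm_nonneg _) ?_
    rw [Vnormsq (u x)]
    exact le_of_eq (Finset.sum_congr rfl fun i _ => by rw [hcomp i])


/-- the forbidden coordinates defining `H_e`. -/
def Forb (M₀ : ℤ) (x : Site) (i : Chir) : Prop :=
  (x ∉ outerDom M₀) ∨ (x ∈ K1m M₀ ∪ K2p M₀ ∪ K2m M₀ ∧ i = 0) ∨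
  (x ∈ K1p M₀ ∪ K2p M₀ ∪ K2m M₀ ∧ i = 1) ∨
  (x ∈ K2m M₀ ∪ K1p M₀ ∪ K1m M₀ ∧ i = 2) ∨
  (x ∈ K2p M₀ ∪ K1p M₀ ∪ K1m M₀ ∧ i = 3)

lemma memHe_iff (M₀ : ℤ) (u : H) :
    memHe M₀ u ↔ ∀ (x : Site) (i : Chir), Forb M₀ x i → u x i = 0 := by
  constructor
  · rintro ⟨h1, h2, h3, h4, h5⟩ x i (h | ⟨h, rfl⟩ | ⟨h, rfl⟩ | ⟨h, rfl⟩ | ⟨h, rfl⟩)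
    · exact h1 x h i
    · exact h2 x h
    · exact h3 x h
    · exact h4 x h
    · exact h5 x h
  · intro h
    exact ⟨fun x hx i => h x i (Or.inl hx),
      fun x hx => h x 0 (Or.inr (Or.inl ⟨hx, rfl⟩)),
      fun x hx => h x 1 (Or.inr (Or.inr (Or.inl ⟨hx, rfl⟩))),
      fun x hx => h x 2 (Or.inr (Or.inr (Or.inr (Or.inl ⟨hx, rfl⟩)))),
      fun x hx => h x 3 (Or.inr (Or.inr (Or.inr (Or.inr ⟨hx, rfl⟩))))⟩

lemma apply_add (u v : H) (x : Site) (i : Chir) : (u + v) x i = u x i + v x i := by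
  rw [lp.coeFn_add]; rfl

lemma apply_smul (c : ℂ) (u : H) (x : Site) (i : Chir) : (c • u) x i = c * u x i := by
  rw [lp.coeFn_smul]; rfl

lemma apply_sub (u v : H) (x : Site) (i : Chir) : (u - v) x i = u x i - v x i := by
  rw [lp.coeFn_sub]; rfl

/-- the exterior space as a submodule. -/
def He (M₀ : ℤ) : Submodule ℂ H where
  carrier := {u | memHe M₀ u}
  add_mem' := by
    intro a b ha hb
    rw [Set.mem_setOf_eq, memHe_iff] at *
    intro x i h
    rw [apply_add, ha x i h, hb x i h, add_zero]
  zero_mem' := by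
    rw [Set.mem_setOf_eq, memHe_iff]
    intro x i _
    show ((0 : H) : ∀ y : Site, V) x i = 0
    rw [lp.coeFn_zero]; rfl
  smul_mem' := by
    intro c a ha
    rw [Set.mem_setOf_eq, memHe_iff] at *
    intro x i h
    rw [apply_smul, ha x i h, mul_zero]

lemma mem_He_iff (M₀ : ℤ) (u : H) : u ∈ He M₀ ↔ memHe M₀ u := Iff.rfl

lemma V_coord_le (w : V) (i : Chir) : ‖w i‖ ≤ ‖w‖ := by
  rw [← Real.sqrt_sq (norm_nonneg (w i)), ← Real.sqrt_sq (norm_nonneg w)]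
  refine Real.sqrt_le_sqrt ?_
  rw [Vnormsq]
  exact Finset.single_le_sum (f := fun j => ‖w j‖ ^ (2:ℕ)) (fun j _ => by positivity)
    (Finset.mem_univ i)

lemma eval_cont (x : Site) (i : Chir) : Continuous (fun u : H => u x i) := by
  refine (LipschitzWith.of_dist_le_mul (K := 1) fun u v => ?_).continuous
  rw [dist_eq_norm, dist_eq_norm, NNReal.coe_one, one_mul]
  calc ‖u x i - v x i‖ = ‖(u - v) x i‖ := by rw [apply_sub]
    _ ≤ ‖(u - v) x‖ := V_coord_le _ i
    _ ≤ ‖u - v‖ := lp.norm_apply_le_norm (by norm_num) (u - v) x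

lemma He_closed (M₀ : ℤ) : IsClosed ((He M₀ : Set H)) := by
  have : (He M₀ : Set H) =
      ⋂ (x : Site) (i : Chir) (_ : Forb M₀ x i), {u : H | u x i = 0} := by
    ext u
    simp only [Set.mem_iInter, Set.mem_setOf_eq, SetLike.mem_coe, mem_He_iff, memHe_iff]
  rw [this]
  exact isClosed_iInter fun x => isClosed_iInter fun i => isClosed_iInter fun _ =>
    isClosed_eq (eval_cont x i) continuous_const


set_option maxHeartbeats 1000000 in
/-- the translated exterior walk `U_e(θ) − e^{−iκ}` is boundedly invertible on
`H_e` for every `Im κ > Im θ` (so `U_e` has no resonances), with a resolvent bound uniform on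
compact subsets of `{Im κ > Im θ}`. -/
theorem exterior_resolvent_estimate
    (M₀ : ℤ) (Cnp : Site → Matrix Chir Chir ℂ)
    (hCnp : IsUnitaryCoin Cnp) (hA1 : SatisfiesA1 Cnp M₀)
    (S Cop : H →L[ℂ] H) (hS : IsShiftOp S) (hCop : IsCoinOp Cop Cnp)
    (hUnit : S.comp Cop ∈ unitary (H →L[ℂ] H))
    (hbar : IsBarrierWalk M₀ (S.comp Cop))
    (heInv : ∀ u : H, memHe M₀ u → memHe M₀ ((S.comp Cop) u))
    (θ : ℂ) (hθ : θ.im < 0)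
    (Mθ : H →L[ℂ] H) (hMθ : IsCoinOp Mθ (transCoin θ Cnp))
    (heInvθ : ∀ u : H, memHe M₀ u → memHe M₀ ((transWalkOp θ S Mθ) u)) :
    (∀ κ : ℂ, θ.im < κ.im →
      (∀ u : H, memHe M₀ u →
        (transWalkOp θ S Mθ) u = Complex.exp (-(Complex.I * κ)) • u → u = 0) ∧
      (∀ f : H, memHe M₀ f → ∃ u : H, memHe M₀ u ∧
        (transWalkOp θ S Mθ) u - Complex.exp (-(Complex.I * κ)) • u = f)) ∧
    ∀ Z : Set ℂ, IsCompact Z → Z ⊆ {κ : ℂ | θ.im < κ.im} →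
      ∃ γ > (0 : ℝ), ∀ κ ∈ Z, ∀ u f : H, memHe M₀ u → memHe M₀ f →
        (transWalkOp θ S Mθ) u - Complex.exp (-(Complex.I * κ)) • u = f →
        ‖u‖ ≤ γ * ‖f‖ := by
  set T : H →L[ℂ] H := transWalkOp θ S Mθ with hT
  set r : ℝ := Real.exp θ.im with hr
  -- the fundamental estimate on H_e
  have hTle : ∀ u : H, memHe M₀ u → ‖T u‖ ≤ r * ‖u‖ := by
    intro u hu
    have h1 : T u = Complex.exp (-(Complex.I * θ)) • (S (Mθ u)) := rfl
    have hn : ‖Complex.exp (-(Complex.I * θ))‖ = r := by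
      rw [Complex.norm_exp]
      congr 1
      simp
    rw [h1, norm_smul, hn]
    refine mul_le_mul_of_nonneg_left ?_ (Real.exp_nonneg _)
    exact (shift_norm_le hS (Mθ u)).trans
      (norm_le_pointwise (coin_pointwise hθ hCnp hA1 hMθ u hu))
  -- data for a fixed κ
  have main : ∀ κ : ℂ, θ.im < κ.im →
      (∀ u : H, memHe M₀ u → T u = Complex.exp (-(Complex.I * κ)) • u → u = 0) ∧
      (∀ f : H, memHe M₀ f → ∃ u : H, memHe M₀ u ∧
        T u - Complex.exp (-(Complex.I * κ)) • u = f) := by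
    intro κ hκ
    set z : ℂ := Complex.exp (-(Complex.I * κ)) with hzdef
    have hznorm : ‖z‖ = Real.exp κ.im := by
      rw [hzdef, Complex.norm_exp]
      congr 1
      simp
    have hz0 : z ≠ 0 := Complex.exp_ne_zero _
    have hrz : r < ‖z‖ := by rw [hznorm, hr]; exact Real.exp_lt_exp.mpr hκ
    constructor
    · intro u hu heq
      have h2 : ‖z‖ * ‖u‖ ≤ r * ‖u‖ := by
        calc ‖z‖ * ‖u‖ = ‖z • u‖ := (norm_smul z u).symm
          _ = ‖T u‖ := by rw [heq]
          _ ≤ r * ‖u‖ := hTle u hu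
      have h3 : ‖u‖ ≤ 0 := by nlinarith [norm_nonneg u]
      exact norm_le_zero_iff.mp h3
    · intro f hf
      -- geometric series construction
      set q : ℝ := r / ‖z‖ with hq
      have hznn : (0:ℝ) < ‖z‖ := norm_pos_iff.mpr hz0
      have hq0 : 0 ≤ q := by positivity
      have hq1 : q < 1 := (div_lt_one hznn).mpr hrz
      obtain ⟨g, hg0, hgs⟩ : ∃ g : ℕ → H, g 0 = f ∧ ∀ n, g (n+1) = z⁻¹ • T (g n) :=
        ⟨fun n => Nat.rec f (fun _ v => z⁻¹ • T v) n, rfl, fun _ => rfl⟩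
      have hmem : ∀ n, memHe M₀ (g n) := by
        intro n
        induction n with
        | zero => rw [hg0]; exact hf
        | succ n ih =>
          rw [hgs n]
          have h1 : T (g n) ∈ He M₀ := (mem_He_iff M₀ _).mpr (heInvθ (g n) ih)
          exact (mem_He_iff M₀ _).mp (Submodule.smul_mem (He M₀) z⁻¹ h1)
      have hr0 : (0:ℝ) ≤ r := Real.exp_nonneg _
      have hgb : ∀ n, ‖g n‖ ≤ q ^ n * ‖f‖ := by
        intro n
        induction n with
        | zero => rw [hg0, pow_zero, one_mul]
        | succ n ih =>
          rw [hgs n, norm_smul, norm_inv]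
          calc ‖z‖⁻¹ * ‖T (g n)‖ ≤ ‖z‖⁻¹ * (r * ‖g n‖) := by
                exact mul_le_mul_of_nonneg_left (hTle (g n) (hmem n)) (by positivity)
            _ ≤ ‖z‖⁻¹ * (r * (q ^ n * ‖f‖)) := by
                refine mul_le_mul_of_nonneg_left ?_ (by positivity)
                exact mul_le_mul_of_nonneg_left ih hr0
            _ = q ^ (n+1) * ‖f‖ := by
                rw [hq]
                ring
      have hgsum : Summable g :=
        Summable.of_norm_bounded ((summable_geometric_of_lt_one hq0 hq1).mul_right ‖f‖) hgb
      set s : H := ∑' n, g n with hs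
      have hsmem : s ∈ He M₀ := by
        refine (He_closed M₀).mem_of_tendsto hgsum.hasSum
          (Filter.Eventually.of_forall fun sf => ?_)
        exact Submodule.sum_mem (He M₀) fun i _ => (mem_He_iff M₀ _).mpr (hmem i)
      have hshift : ∀ n, T (g n) = z • g (n+1) := by
        intro n
        rw [hgs n, smul_smul, mul_inv_cancel₀ hz0, one_smul]
      have hTs : T s = z • (s - f) := by
        have h1 : T s = ∑' n, T (g n) := T.map_tsum hgsum
        have h2 : (∑' n, T (g n)) = ∑' n, z • g (n+1) := tsum_congr hshift
        have hgsum1 : Summable (fun n => g (n+1)) := by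
          exact hgsum.comp_injective (add_left_injective 1)
        have h3 : (∑' n, z • g (n+1)) = z • ∑' n, g (n+1) := Summable.tsum_const_smul z hgsum1
        have h4 : (∑' n, g (n+1)) = s - f := by
          have := Summable.tsum_eq_zero_add hgsum
          rw [hg0] at this
          rw [hs, this]
          abel
        rw [h1, h2, h3, h4]
      refine ⟨(-z⁻¹) • s, (mem_He_iff M₀ _).mp (Submodule.smul_mem (He M₀) (-z⁻¹) hsmem), ?_⟩
      have hTu : T ((-z⁻¹) • s) = (-z⁻¹) • T s := T.map_smul _ _
      rw [hTu, hTs, smul_smul, smul_smul]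
      rw [show -z⁻¹ * z = -1 by field_simp, show z * -z⁻¹ = -1 by field_simp]
      rw [neg_one_smul, neg_one_smul]
      abel
  refine ⟨main, ?_⟩
  intro Z hZc hZsub
  rcases Z.eq_empty_or_nonempty with rfl | hne
  · exact ⟨1, one_pos, fun κ hκ => absurd hκ (by simp)⟩
  · obtain ⟨κ₀, hκ₀Z, hmin⟩ := hZc.exists_isMinOn hne Complex.continuous_im.continuousOn
    have hm : θ.im < κ₀.im := hZsub hκ₀Z
    have hpos : (0:ℝ) < Real.exp κ₀.im - r := by
      rw [hr]
      have := Real.exp_lt_exp.mpr hm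
      linarith
    refine ⟨(Real.exp κ₀.im - r)⁻¹, by positivity, ?_⟩
    intro κ hκZ u f hu hf heq
    set z : ℂ := Complex.exp (-(Complex.I * κ)) with hzdef
    have hznorm : ‖z‖ = Real.exp κ.im := by
      rw [hzdef, Complex.norm_exp]
      congr 1
      simp
    have hle : Real.exp κ₀.im ≤ Real.exp κ.im :=
      Real.exp_le_exp.mpr ((isMinOn_iff.mp hmin) κ hκZ)
    have h1 : ‖z • u‖ ≤ ‖T u‖ + ‖f‖ := by
      have : z • u = T u - f := by rw [← heq]; abel
      rw [this]
      exact norm_sub_le _ _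
    have h2 : Real.exp κ.im * ‖u‖ ≤ r * ‖u‖ + ‖f‖ := by
      rw [← hznorm, ← norm_smul]
      exact h1.trans (by exact add_le_add (hTle u hu) le_rfl)
    have h3 : (Real.exp κ₀.im - r) * ‖u‖ ≤ ‖f‖ := by nlinarith [norm_nonneg u]
    rw [mul_comm] at h3
    rw [inv_mul_eq_div]
    exact (le_div_iff₀ hpos).mpr h3


end QWPaper
end
end
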